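/- In the quantum-logic framework below, if a and b are commuting propositions and p is a pure state, then (p : p_b)·p_b(a) = (p : p_{b∧a}), assuming the commutative no-signal hypothesis (CNS). -/
import Mathlib


/-- Quantum-logic framework: `Lg` is an orthomodular-poset-style logic (here a bounded
lattice with an orthocomplementation map `compl` and a commutativity relation `Comm`),
`P` the pure states, `val p a` the probability `p(a)`, `s p` the atomic indicator
proposition of `p`, and `collapse p a` the collapsed state `p_a`. The transition
probability is `(p : q) = val p (s q)`. -/
theorem stmt12 {Lg P : Type*} [Lattice Lg] [BoundedOrder Lg]
    (compl : Lg → Lg) (Comm : Lg → Lg → Prop)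
    (val : P → Lg → ℝ) (s : P → Lg) (collapse : P → Lg → P)
    (p : P) (a b : Lg)
    -- Commutative no-signal hypothesis (CNS), with the common value identified as `p(a)`
    -- (which follows from taking the singleton family `{1}`):
    (hCNS : ∀ (n : ℕ) (bs : Fin n → Lg) (c : Lg),
      (∀ j, Comm c (bs j)) →
      (∀ i j, i ≠ j → bs i ≤ compl (bs j)) →
      Finset.univ.sup bs = ⊤ →
      ∑ j, val p (s (collapse p (bs j))) * val (collapse p (bs j)) c = val p c)
    (hcomm : Comm a b)
    -- the family `{b, b′}` is commuting with `a`, pairwise orthogonal and exhaustive: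
    (hfam2 : (∀ j, Comm a (![b, compl b] j)) ∧
      (∀ i j, i ≠ j → ![b, compl b] i ≤ compl (![b, compl b] j)) ∧
      Finset.univ.sup ![b, compl b] = ⊤)
    -- the family `{b ∧ a, b ∧ a′, b′}` likewise (uses commutativity of `a` and `b`):
    (hfam3 : (∀ j, Comm a (![b ⊓ a, b ⊓ compl a, compl b] j)) ∧
      (∀ i j, i ≠ j →
        ![b ⊓ a, b ⊓ compl a, compl b] i ≤ compl (![b ⊓ a, b ⊓ compl a, compl b] j)) ∧
      Finset.univ.sup ![b ⊓ a, b ⊓ compl a, compl b] = ⊤)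
    (hzero : val (collapse p (b ⊓ compl a)) a = 0)
    (hone : val (collapse p (b ⊓ a)) a = 1) :
    val p (s (collapse p b)) * val (collapse p b) a =
      val p (s (collapse p (b ⊓ a))) := by
  have h2 := hCNS 2 ![b, compl b] a hfam2.1 hfam2.2.1 hfam2.2.2
  have h3 := hCNS 3 ![b ⊓ a, b ⊓ compl a, compl b] a hfam3.1 hfam3.2.1 hfam3.2.2
  simp [Fin.sum_univ_two, Fin.sum_univ_three] at h2 h3
  rw [hzero, hone] at h3
  nlinarith [h2, h3]
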